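/- The braid b⁷ = σ_3^{−3} σ_1 σ_2^{2} σ_1^{−4} σ_2^{−1} σ_3 σ_1^{−2} σ_2^{−3} σ_3^{−1} σ_2 σ_1^{−1} Δ_4^2 in the braid group B_4 is not quasipositive. -/

import Mathlib

open FreeGroup in
/-- The braid relations on `n` generators. -/
def braidRels (n : ℕ) : Set (FreeGroup (Fin n)) :=
  {r | (∃ i j : Fin n, (i : ℕ) + 1 = (j : ℕ) ∧
          r = of i * of j * of i * (of j * of i * of j)⁻¹) ∨
       (∃ i j : Fin n, (i : ℕ) + 2 ≤ (j : ℕ) ∧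
          r = of i * of j * (of j * of i)⁻¹)}

/-- The braid group `B_{n+1}`, presented with `n` generators `σ_1, …, σ_n`
(so `Braid (m - 1)` is the braid group on `m` strands). -/
def Braid (n : ℕ) : Type := PresentedGroup (braidRels n)

instance (n : ℕ) : Group (Braid n) :=
  inferInstanceAs (Group (PresentedGroup (braidRels n)))

/-- The Artin generator `σ_{i+1}` of the braid group (indices start at `0`,
so `σ 0` is the generator usually written `σ_1`). -/
def σ {n : ℕ} (i : Fin n) : Braid n := PresentedGroup.of i

/-- A braid is quasipositive if it can be written as a (possibly empty) product
of conjugates `w σ_1 w⁻¹` of the first Artin generator. -/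
def Quasipositive {n : ℕ} [NeZero n] (b : Braid n) : Prop :=
  ∃ l : List (Braid n), b = (l.map fun w => w * σ 0 * w⁻¹).prod


/-- `σ_1` in the braid group `B_4`. -/
def σ₁ : Braid 3 := σ 0
/-- `σ_2` in the braid group `B_4`. -/
def σ₂ : Braid 3 := σ 1
/-- `σ_3` in the braid group `B_4`. -/
def σ₃ : Braid 3 := σ 2
/-- The Garside element `Δ_4 = σ_1 σ_2 σ_3 σ_1 σ_2 σ_1` of `B_4`. -/
def Δ₄ : Braid 3 := σ₁ * σ₂ * σ₃ * σ₁ * σ₂ * σ₁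

/-! ### Auxiliary: a finite quotient of `B₄` in `S₇` preserving a Fano-type structure -/

/-- Helper to build a permutation of `Fin 7`. -/
def pp (f g : Fin 7 → Fin 7) (h1 : ∀ x, g (f x) = x := by decide)
    (h2 : ∀ x, f (g x) = x := by decide) : Equiv.Perm (Fin 7) :=
  ⟨f, g, h1, h2⟩

def aP : Equiv.Perm (Fin 7) := pp ![1,2,3,4,5,6,0] ![6,0,1,2,3,4,5]
def bP : Equiv.Perm (Fin 7) := pp ![5,3,1,0,2,6,4] ![3,2,4,1,6,0,5]

def C24l : List (Equiv.Perm (Fin 7)) := [pp ![1,2,3,4,5,6,0] ![6,0,1,2,3,4,5],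
  pp ![1,3,6,2,0,4,5] ![4,0,3,1,5,6,2],
  pp ![1,4,5,0,6,3,2] ![3,0,6,5,1,2,4],
  pp ![1,6,0,5,3,2,4] ![2,0,5,4,6,3,1],
  pp ![2,0,6,1,5,3,4] ![1,3,0,5,6,4,2],
  pp ![2,3,4,5,6,0,1] ![5,6,0,1,2,3,4],
  pp ![2,5,1,6,3,4,0] ![6,2,0,4,5,1,3],
  pp ![2,6,5,4,0,1,3] ![4,5,0,6,3,2,1],
  pp ![3,0,1,4,6,2,5] ![1,2,5,0,3,6,4],
  pp ![3,2,5,6,1,0,4] ![5,4,1,0,6,2,3],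
  pp ![3,4,6,5,2,1,0] ![6,5,4,0,1,3,2],
  pp ![3,5,4,1,0,6,2] ![4,3,6,0,2,1,5],
  pp ![4,0,5,2,3,6,1] ![1,6,3,4,0,2,5],
  pp ![4,3,0,6,5,1,2] ![2,5,6,1,0,4,3],
  pp ![4,5,6,0,1,2,3] ![3,4,5,6,0,1,2],
  pp ![4,6,3,1,2,0,5] ![5,3,4,2,0,6,1],
  pp ![5,2,0,1,6,4,3] ![2,3,1,6,5,0,4],
  pp ![5,3,1,0,2,6,4] ![3,2,4,1,6,0,5],
  pp ![5,4,3,6,0,2,1] ![4,6,5,2,1,0,3],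
  pp ![5,6,4,2,1,3,0] ![6,4,3,5,2,0,1],
  pp ![6,0,3,5,1,4,2] ![1,4,6,2,5,3,0],
  pp ![6,2,4,0,3,1,5] ![3,5,1,4,2,6,0],
  pp ![6,4,1,2,5,0,3] ![5,2,3,6,1,4,0],
  pp ![6,5,0,4,2,3,1] ![2,6,4,5,3,1,0]]

/-- The image of the braid `b⁷` in `S₇`. -/
def tP : Equiv.Perm (Fin 7) := pp ![6,5,1,2,4,3,0] ![6,2,3,5,4,1,0]

/-- Boolean equality test for permutations of `Fin 7`. -/
def pbeq (p q : Equiv.Perm (Fin 7)) : Bool :=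
  (List.finRange 7).all fun x => decide (p x = q x)

lemma pbeq_true_iff (p q : Equiv.Perm (Fin 7)) : pbeq p q = true ↔ p = q := by
  constructor
  · intro h
    apply Equiv.ext
    intro x
    exact of_decide_eq_true (List.all_eq_true.mp h x (List.mem_finRange x))
  · rintro rfl
    simp [pbeq]

/-- The generators of the finite quotient. -/
def fP : Fin 3 → Equiv.Perm (Fin 7) := ![aP, bP, aP]

lemma fP_rels : ∀ r ∈ braidRels 3, FreeGroup.lift fP r = 1 := by
  rintro r (⟨i, j, hij, rfl⟩ | ⟨i, j, hij, rfl⟩) <;>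
    fin_cases i <;> fin_cases j <;>
      simp only [Fin.isValue, Fin.val_zero, Fin.val_one, Fin.val_two] at hij <;>
        first
          | omega
          | (simp only [map_mul, map_inv, FreeGroup.lift_apply_of]; decide)

/-- The quotient homomorphism `B₄ → S₇`. -/
def φ : Braid 3 →* Equiv.Perm (Fin 7) := PresentedGroup.toGroup fP_rels

lemma e_rels : ∀ r ∈ braidRels 3,
    FreeGroup.lift (fun _ : Fin 3 => Multiplicative.ofAdd (1 : ℤ)) r = 1 := by
  rintro r (⟨i, j, hij, rfl⟩ | ⟨i, j, hij, rfl⟩) <;>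
    simp only [map_mul, map_inv, FreeGroup.lift_apply_of] <;> decide

/-- The exponent-sum homomorphism `B₄ → ℤ`. -/
def eh : Braid 3 →* Multiplicative ℤ := PresentedGroup.toGroup e_rels

/-- The invariant: conjugation by `g` permutes the list `C24l`. -/
def QP (g : Equiv.Perm (Fin 7)) : Prop :=
  (C24l.map fun u => g * u * g⁻¹).Perm C24l

lemma perm_of_counts {l1 l2 : List (Equiv.Perm (Fin 7))}
    (h1 : ∀ x ∈ l1, l1.count x = l2.count x)
    (h2 : ∀ x ∈ l2, l1.count x = l2.count x) : l1.Perm l2 := by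
  rw [List.perm_iff_count]
  intro a
  by_cases m1 : a ∈ l1
  · exact h1 a m1
  by_cases m2 : a ∈ l2
  · exact h2 a m2
  rw [List.count_eq_zero_of_not_mem m1, List.count_eq_zero_of_not_mem m2]

lemma QP_of_check (g : Equiv.Perm (Fin 7))
    (h : (((C24l.map fun u => g * u * g⁻¹).all fun x =>
            decide ((C24l.map fun u => g * u * g⁻¹).count x = C24l.count x))
          && (C24l.all fun x =>
            decide ((C24l.map fun u => g * u * g⁻¹).count x = C24l.count x))) = true) :
    QP g := by
  rw [Bool.and_eq_true] at h
  exact perm_of_counts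
    (fun x hx => of_decide_eq_true (List.all_eq_true.mp h.1 x hx))
    (fun x hx => of_decide_eq_true (List.all_eq_true.mp h.2 x hx))

lemma QP_aP : QP aP := QP_of_check aP (by decide)
lemma QP_bP : QP bP := QP_of_check bP (by decide)

lemma QP_one : QP 1 := by
  unfold QP
  simp

lemma QP_mul (g h : Equiv.Perm (Fin 7)) (hg : QP g) (hh : QP h) : QP (g * h) := by
  unfold QP at *
  have hfun : (fun u : Equiv.Perm (Fin 7) => g * h * u * (g * h)⁻¹)
      = ((fun u => g * u * g⁻¹) ∘ (fun u => h * u * h⁻¹)) := by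
    funext u
    simp [mul_assoc, mul_inv_rev]
  rw [hfun, ← List.map_map]
  exact ((hh.map fun u => g * u * g⁻¹).trans hg)

lemma QP_inv (g : Equiv.Perm (Fin 7)) (hg : QP g) : QP g⁻¹ := by
  unfold QP at *
  have h1 := hg.map fun u => g⁻¹ * u * g⁻¹⁻¹
  rw [List.map_map] at h1
  have hfun : ((fun u : Equiv.Perm (Fin 7) => g⁻¹ * u * g⁻¹⁻¹) ∘ (fun u => g * u * g⁻¹))
      = id := by
    funext u
    simp [mul_assoc]
  rw [hfun, List.map_id] at h1
  exact h1.symm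

lemma QP_phi (z : Braid 3) : QP (φ z) := by
  have hz : z ∈ Subgroup.closure
      (Set.range (PresentedGroup.of : Fin 3 → PresentedGroup (braidRels 3))) := by
    rw [PresentedGroup.closure_range_of]; trivial
  induction hz using Subgroup.closure_induction with
  | mem x hx =>
      obtain ⟨i, rfl⟩ := hx
      have hof : φ (PresentedGroup.of i) = fP i := PresentedGroup.toGroup.of fP_rels
      rw [hof]
      fin_cases i
      · exact QP_aP
      · exact QP_bP
      · exact QP_aP
  | one => rw [map_one]; exact QP_one
  | mul x y _ _ hx hy => rw [map_mul]; exact QP_mul _ _ hx hy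
  | inv x _ hx => exact (congrArg QP (map_inv φ x)).mpr (QP_inv _ hx)

lemma aP_mem : aP ∈ C24l := by
  have h : C24l.any (fun u => pbeq aP u) = true := by decide
  obtain ⟨x, hx, hpb⟩ := List.any_eq_true.mp h
  rw [(pbeq_true_iff aP x).mp hpb]
  exact hx

lemma key : ∀ u ∈ C24l, ∀ v ∈ C24l, u * v ≠ tP := by
  have hb : (C24l.all fun u => C24l.all fun v => !pbeq (u * v) tP) = true := by decide
  intro u hu v hv heq
  have h1 := List.all_eq_true.mp (List.all_eq_true.mp hb u hu) v hv
  rw [(pbeq_true_iff (u * v) tP).mpr heq] at h1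
  exact absurd h1 (by simp)

lemma phi_of (i : Fin 3) : φ (σ i) = fP i := PresentedGroup.toGroup.of fP_rels

lemma eh_of (i : Fin 3) : eh (σ i) = Multiplicative.ofAdd (1 : ℤ) :=
  PresentedGroup.toGroup.of e_rels

set_option maxRecDepth 20000 in
set_option maxHeartbeats 1000000 in
theorem b7_not_quasipositive :
    ¬ Quasipositive
      ((σ₃ ^ 3)⁻¹ * σ₁ * σ₂ ^ 2 * (σ₁ ^ 4)⁻¹ * σ₂⁻¹ * σ₃ * (σ₁ ^ 2)⁻¹ *
        (σ₂ ^ 3)⁻¹ * σ₃⁻¹ * σ₂ * σ₁⁻¹ * Δ₄ ^ 2) := by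
  rintro ⟨l, hl⟩
  -- the exponent sum of the braid is 2
  have he : eh ((σ₃ ^ 3)⁻¹ * σ₁ * σ₂ ^ 2 * (σ₁ ^ 4)⁻¹ * σ₂⁻¹ * σ₃ * (σ₁ ^ 2)⁻¹ *
      (σ₂ ^ 3)⁻¹ * σ₃⁻¹ * σ₂ * σ₁⁻¹ * Δ₄ ^ 2) = Multiplicative.ofAdd (2 : ℤ) := by
    simp only [σ₁, σ₂, σ₃, Δ₄, map_mul, map_inv, map_pow, eh_of]
    rfl
  -- the exponent sum of a quasipositive product is the number of factors
  have he2 : eh ((l.map fun w => w * σ 0 * w⁻¹).prod)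
      = Multiplicative.ofAdd (l.length : ℤ) := by
    rw [map_list_prod, List.map_map]
    have hc : (⇑eh ∘ fun w => w * σ 0 * w⁻¹)
        = fun _ => Multiplicative.ofAdd (1 : ℤ) := by
      funext w
      simp only [Function.comp_apply, map_mul, map_inv, eh_of, mul_inv_cancel_comm]
    rw [hc, List.map_const', List.prod_replicate, ← ofAdd_nsmul]
    simp
  have hlen : l.length = 2 := by
    rw [hl, he2] at he
    have := Multiplicative.ofAdd.injective he
    omega
  obtain ⟨w1, w2, rfl⟩ := List.length_eq_two.mp hlen
  -- the image of the braid in `S₇`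
  have hφb : φ ((σ₃ ^ 3)⁻¹ * σ₁ * σ₂ ^ 2 * (σ₁ ^ 4)⁻¹ * σ₂⁻¹ * σ₃ * (σ₁ ^ 2)⁻¹ *
      (σ₂ ^ 3)⁻¹ * σ₃⁻¹ * σ₂ * σ₁⁻¹ * Δ₄ ^ 2) = tP := by
    simp only [σ₁, σ₂, σ₃, Δ₄, map_mul, map_inv, map_pow, phi_of]
    decide
  have hφ2 : φ (([w1, w2].map fun w => w * σ 0 * w⁻¹).prod)
      = (φ w1 * aP * (φ w1)⁻¹) * (φ w2 * aP * (φ w2)⁻¹) := by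
    simp only [List.map_cons, List.map_nil, List.prod_cons, List.prod_nil, mul_one,
      map_mul, map_inv]
    rw [show φ (σ 0) = aP from phi_of 0]
  -- both factors lie in the 24-element class, but no product of two such is `tP`
  have hu : φ w1 * aP * (φ w1)⁻¹ ∈ C24l :=
    (QP_phi w1).mem_iff.mp (List.mem_map_of_mem (f := fun u => φ w1 * u * (φ w1)⁻¹) aP_mem)
  have hv : φ w2 * aP * (φ w2)⁻¹ ∈ C24l :=
    (QP_phi w2).mem_iff.mp (List.mem_map_of_mem (f := fun u => φ w2 * u * (φ w2)⁻¹) aP_mem)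
  exact key _ hu _ hv (by rw [← hφ2, ← hl, hφb])
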